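/- Fix nonnegative integers r, s with r >= 2. For nonnegative integers k, the sum over k of C(s+1, k+1) * C(r-1, k+1) * (k+1)*k/2 equals C(s+1, 2) * C(r+s-2, r-3). -/

import Mathlib

/-- The binomial coefficient with integer arguments, equal to 0 when `k < 0` or `k > n`. -/
def intChoose (n k : ℤ) : ℤ := if 0 ≤ k ∧ k ≤ n then Nat.choose n.toNat k.toNat else 0

lemma intChoose_natCast (a b : ℕ) : intChoose (a : ℤ) (b : ℤ) = (a.choose b : ℤ) := by
  by_cases h : (b : ℤ) ≤ (a : ℤ)
  · simp [intChoose, h]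
  · have hab : a < b := by exact_mod_cast not_le.mp h
    simp [intChoose, h, Nat.choose_eq_zero_of_lt hab]

lemma aux_choose (s i : ℕ) :
    (s + 1).choose (i + 2) * (i + 2).choose 2 = (s + 1).choose 2 * (s - 1).choose i := by
  rcases le_or_gt (i + 2) (s + 1) with h | h
  · have := Nat.choose_mul (n := s + 1) (k := i + 2) (s := 2) (by omega)
    simpa using this
  · rcases Nat.eq_zero_or_pos s with rfl | hs
    · simp [Nat.choose_eq_zero_of_lt h]
    · rw [Nat.choose_eq_zero_of_lt h, Nat.choose_eq_zero_of_lt (show s - 1 < i by omega)]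
      simp

lemma key (m s : ℕ) :
    ∑ k ∈ Finset.range (m + 2),
      (s + 1).choose (k + 1) * (m + 2).choose (k + 1) * ((k + 1).choose 2) =
      (s + 1).choose 2 * (m + s + 1).choose m := by
  rw [Finset.sum_range_succ']
  have h0 : (s + 1).choose (0 + 1) * (m + 2).choose (0 + 1) * (0 + 1).choose 2 = 0 := by
    norm_num
  rw [h0, Nat.add_zero]
  rcases Nat.eq_zero_or_pos s with rfl | hs
  · simp only [Nat.zero_add]
    rw [Finset.sum_eq_zero]
    · simp
    · intro i _
      have : Nat.choose 1 (i + 1 + 1) = 0 := Nat.choose_eq_zero_of_lt (by omega)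
      simp [this]
  · obtain ⟨t, rfl⟩ : ∃ t, s = t + 1 := ⟨s - 1, by omega⟩
    have step : ∀ i ∈ Finset.range (m + 1),
        (t + 1 + 1).choose (i + 1 + 1) * (m + 2).choose (i + 1 + 1) * (i + 1 + 1).choose 2 =
        (t + 1 + 1).choose 2 * (t.choose i * (m + 2).choose (m - i)) := by
      intro i hi
      have hsym : (m + 2).choose (i + 2) = (m + 2).choose (m - i) := by
        have hle : i + 2 ≤ m + 2 := by
          simp only [Finset.mem_range] at hi; omega
        rw [← Nat.choose_symm hle]
        congr 1
        omega
      have := aux_choose (t + 1) i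
      simp only [show t + 1 - 1 = t by omega] at this
      calc (t + 1 + 1).choose (i + 1 + 1) * (m + 2).choose (i + 1 + 1) * (i + 1 + 1).choose 2
          = ((t + 1 + 1).choose (i + 2) * (i + 2).choose 2) * (m + 2).choose (i + 2) := by ring_nf
        _ = ((t + 1 + 1).choose 2 * t.choose i) * (m + 2).choose (m - i) := by rw [this, hsym]
        _ = (t + 1 + 1).choose 2 * (t.choose i * (m + 2).choose (m - i)) := by ring
    rw [Finset.sum_congr rfl step, ← Finset.mul_sum]
    congr 1
    have vdm := Nat.add_choose_eq t (m + 2) m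
    rw [Finset.Nat.sum_antidiagonal_eq_sum_range_succ_mk] at vdm
    rw [← vdm]
    congr 1
    omega

/-- For `r ≥ 2`, the sum over all nonnegative integers `k` of
`C(s+1, k+1) * C(r-1, k+1) * (k+1)*k/2` equals `C(s+1, 2) * C(r+s-2, r-3)`. -/
theorem sum_choose_captains (r s : ℕ) (hr : 2 ≤ r) :
    ∑ᶠ k : ℕ,
      intChoose ((s : ℤ) + 1) ((k : ℤ) + 1) * intChoose ((r : ℤ) - 1) ((k : ℤ) + 1) *
        (((k : ℤ) + 1) * k / 2) =
      intChoose ((s : ℤ) + 1) 2 * intChoose ((r : ℤ) + s - 2) ((r : ℤ) - 3) := by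
  rcases Nat.lt_or_ge r 3 with hr3 | hr3
  · -- r = 2
    have hr2 : r = 2 := by omega
    subst hr2
    have hz : ∀ k : ℕ,
        intChoose ((s : ℤ) + 1) ((k : ℤ) + 1) * intChoose ((2 : ℕ) - 1 : ℤ) ((k : ℤ) + 1) *
        (((k : ℤ) + 1) * k / 2) = 0 := by
      intro k
      cases k with
      | zero => simp
      | succ n =>
        have : intChoose ((2 : ℕ) - 1 : ℤ) ((n + 1 : ℕ) + 1 : ℤ) = 0 := by
          rw [intChoose, if_neg]
          push_cast
          omega
        rw [this, mul_zero, zero_mul]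
    rw [finsum_eq_zero_of_forall_eq_zero hz]
    have : intChoose (((2 : ℕ) : ℤ) + s - 2) (((2 : ℕ) : ℤ) - 3) = 0 := by
      rw [intChoose, if_neg]
      push_cast
      intro h
      exact h.1
    rw [this, mul_zero]
  · -- r = m + 3
    obtain ⟨m, rfl⟩ : ∃ m, r = m + 3 := ⟨r - 3, by omega⟩
    have hc1 : ((m + 3 : ℕ) : ℤ) - 1 = ((m + 2 : ℕ) : ℤ) := by push_cast; ring
    have hc2 : ((m + 3 : ℕ) : ℤ) - 3 = ((m : ℕ) : ℤ) := by push_cast; ring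
    have hc3 : ((m + 3 : ℕ) : ℤ) + s - 2 = ((m + s + 1 : ℕ) : ℤ) := by push_cast; ring
    have hterm : ∀ k : ℕ,
        intChoose ((s : ℤ) + 1) ((k : ℤ) + 1) * intChoose (((m + 3 : ℕ) : ℤ) - 1) ((k : ℤ) + 1) *
          (((k : ℤ) + 1) * k / 2) =
        (((s + 1).choose (k + 1) * (m + 2).choose (k + 1) * ((k + 1).choose 2) : ℕ) : ℤ) := by
      intro k
      rw [hc1]
      have e1 : (s : ℤ) + 1 = ((s + 1 : ℕ) : ℤ) := by push_cast; ring
      have e2 : (k : ℤ) + 1 = ((k + 1 : ℕ) : ℤ) := by push_cast; ring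
      rw [e1, e2, intChoose_natCast, intChoose_natCast]
      obtain ⟨c, hc⟩ := Nat.even_mul_succ_self k
      have h1 : (k + 1) * k = 2 * c := by rw [Nat.mul_comm]; omega
      have h2 : ((k + 1 : ℕ) : ℤ) * (k : ℕ) = 2 * (c : ℤ) := by exact_mod_cast h1
      have e3 : (((k + 1) * k / 2 : ℕ) : ℤ) = ((k + 1 : ℕ) : ℤ) * (k : ℕ) / 2 := by
        rw [h1, h2, Nat.mul_div_cancel_left _ (by norm_num),
          Int.mul_ediv_cancel_left _ (by norm_num)]
      have e4 : (k + 1).choose 2 = (k + 1) * k / 2 := by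
        rw [Nat.choose_two_right]
        simp
      rw [e4, Nat.cast_mul, Nat.cast_mul, e3]
    have hsupp : Function.support (fun k : ℕ =>
        intChoose ((s : ℤ) + 1) ((k : ℤ) + 1) * intChoose (((m + 3 : ℕ) : ℤ) - 1) ((k : ℤ) + 1) *
          (((k : ℤ) + 1) * k / 2)) ⊆ (Finset.range (m + 2) : Finset ℕ) := by
      intro k hk
      simp only [Function.mem_support] at hk
      by_contra hmem
      apply hk
      rw [hterm k]
      have : (m + 2).choose (k + 1) = 0 := by
        apply Nat.choose_eq_zero_of_lt
        simp only [Finset.coe_range, Set.mem_Iio] at hmem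
        omega
      simp [this]
    rw [finsum_eq_sum_of_support_subset _ hsupp]
    rw [Finset.sum_congr rfl (fun k _ => hterm k)]
    rw [hc3, hc2, intChoose_natCast]
    have e1 : (s : ℤ) + 1 = ((s + 1 : ℕ) : ℤ) := by push_cast; ring
    have e2 : (2 : ℤ) = ((2 : ℕ) : ℤ) := by norm_num
    rw [e1, e2, intChoose_natCast]
    rw [← Nat.cast_sum]
    exact_mod_cast congrArg (Nat.cast : ℕ → ℤ) (key m s)
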